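/- Let σ be a permutation of {1,…,n} sorting the costs in descending order, f_(1) ≥ ⋯ ≥ f_(n) with f_(i) := f_{σ(i)} and p_(i) := p_{σ(i)}. Let k ∈ {1,…,n−1}, and let ε ≥ 0 and Δ > 0 satisfy Σ_{i=k+2}^{n} p_(i) ≤ ε · Σ_{i=1}^{k+1} p_(i) and (ε + Δ) · Σ_{i=1}^{k} p_(i) ≤ Σ_{i=k+1}^{n} p_(i). Then the worst-case expected cost over the budgeted uncertainty set is linear on this range with slope equal to Σ_{i=1}^{k} p_(i) (f_(i) − f_(k+1)); that is, V_b(ε + Δ; f) − V_b(ε; f) = Δ · Σ_{i=1}^{k} p_(i) (f_(i) − f_(k+1)). -/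

import Mathlib

open Finset

private lemma splitSum (n : ℕ) (k : Fin n) (h : Fin n → ℝ) (c0 : ℝ) :
    ∑ i : Fin n, (if (i : ℕ) < (k : ℕ) then h i else if i = k then c0 else 0)
      = (∑ i ∈ univ.filter (fun i : Fin n => (i : ℕ) < (k : ℕ)), h i) + c0 := by
  rw [← sum_filter_add_sum_filter_not univ (fun i : Fin n => (i : ℕ) < (k : ℕ))]
  congr 1
  · exact sum_congr rfl (fun i hi => by rw [if_pos (mem_filter.mp hi).2])
  · have : ∀ i ∈ univ.filter (fun i : Fin n => ¬ (i : ℕ) < (k : ℕ)),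
        (if (i : ℕ) < (k : ℕ) then h i else if i = k then c0 else 0)
          = if i = k then c0 else 0 :=
      fun i hi => by rw [if_neg (mem_filter.mp hi).2]
    rw [sum_congr rfl this, sum_ite_eq' _ k (fun _ => c0),
      if_pos (mem_filter.mpr ⟨mem_univ k, lt_irrefl _⟩)]

private lemma sortedVal (n : ℕ) (p f : Fin n → ℝ)
    (hp1 : ∑ i, p i = 1) (hp : ∀ i, 0 < p i)
    (σ : Equiv.Perm (Fin n)) (hσ : ∀ i j : Fin n, i ≤ j → f (σ j) ≤ f (σ i))
    (k : Fin n) (e : ℝ) (he : 0 ≤ e)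
    (hA : (∑ i ∈ univ.filter (fun i : Fin n => (k : ℕ) < (i : ℕ)), p (σ i))
          ≤ e * ∑ i ∈ univ.filter (fun i : Fin n => (i : ℕ) ≤ (k : ℕ)), p (σ i))
    (hB : e * (∑ i ∈ univ.filter (fun i : Fin n => (i : ℕ) < (k : ℕ)), p (σ i))
          ≤ ∑ i ∈ univ.filter (fun i : Fin n => (k : ℕ) ≤ (i : ℕ)), p (σ i)) :
    sSup ((fun q : Fin n → ℝ => ∑ i, q i * f i) ''
      {q : Fin n → ℝ | (∑ i, q i = 1 ∧ ∀ i, 0 ≤ q i) ∧ ∀ i, q i ≤ (1 + e) * p i}) =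
    (1 + e) * (∑ i ∈ univ.filter (fun i : Fin n => (i : ℕ) < (k : ℕ)), p (σ i) * f (σ i))
      + (1 - (1 + e) * ∑ i ∈ univ.filter (fun i : Fin n => (i : ℕ) < (k : ℕ)), p (σ i))
        * f (σ k) := by
  set B := ∑ i ∈ univ.filter (fun i : Fin n => (i : ℕ) < (k : ℕ)), p (σ i) with hBdef
  set A := ∑ i ∈ univ.filter (fun i : Fin n => (i : ℕ) < (k : ℕ)), p (σ i) * f (σ i) with hAdef
  set c := f (σ k) with hcdef
  have hsumσ : ∑ i, p (σ i) = 1 := (Equiv.sum_comp σ p).trans hp1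
  -- partition identities
  have part1 : B + (∑ i ∈ univ.filter (fun i : Fin n => (k : ℕ) ≤ (i : ℕ)), p (σ i)) = 1 := by
    rw [← hsumσ, ← sum_filter_add_sum_filter_not univ (fun i : Fin n => (i : ℕ) < (k : ℕ))
      (fun i => p (σ i))]
    simp only [not_lt]
    rfl
  have part2 : (∑ i ∈ univ.filter (fun i : Fin n => (i : ℕ) ≤ (k : ℕ)), p (σ i))
      + (∑ i ∈ univ.filter (fun i : Fin n => (k : ℕ) < (i : ℕ)), p (σ i)) = 1 := by
    rw [← hsumσ, ← sum_filter_add_sum_filter_not univ (fun i : Fin n => (i : ℕ) ≤ (k : ℕ))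
      (fun i => p (σ i))]
    simp only [not_le]
  have hBk : B + p (σ k) = ∑ i ∈ univ.filter (fun i : Fin n => (i : ℕ) ≤ (k : ℕ)), p (σ i) := by
    rw [hBdef]
    have : univ.filter (fun i : Fin n => (i : ℕ) ≤ (k : ℕ))
        = insert k (univ.filter (fun i : Fin n => (i : ℕ) < (k : ℕ))) := by
      ext i; simp [Finset.mem_insert, Fin.ext_iff, Nat.le_iff_lt_or_eq, or_comm]
    rw [this, sum_insert (by simp)]
    ring
  have hBnn : 0 ≤ B := sum_nonneg fun i _ => (hp (σ i)).le
  have hrem : 0 ≤ 1 - (1 + e) * B := by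
    have := hB.trans_eq (by linarith [part1] : (∑ i ∈ univ.filter
      (fun i : Fin n => (k : ℕ) ≤ (i : ℕ)), p (σ i)) = 1 - B)
    linarith
  have hremub : 1 - (1 + e) * B ≤ (1 + e) * p (σ k) := by
    have h1' : 1 - (B + p (σ k)) ≤ e * (B + p (σ k)) := by
      rw [hBk]; linarith [part2]
    nlinarith
  -- the maximizing vector
  set q0 : Fin n → ℝ := fun j =>
    if ((σ.symm j : Fin n) : ℕ) < (k : ℕ) then (1 + e) * p j
    else if σ.symm j = k then 1 - (1 + e) * B else 0 with hq0
  have hq0σ : ∀ i : Fin n, q0 (σ i)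
      = if (i : ℕ) < (k : ℕ) then (1 + e) * p (σ i)
        else if i = k then 1 - (1 + e) * B else 0 := by
    intro i; simp [hq0, Equiv.symm_apply_apply]
  have hq0sum : ∑ i, q0 i = 1 := by
    rw [← Equiv.sum_comp σ q0]
    calc ∑ i, q0 (σ i)
        = ∑ i : Fin n, (if (i : ℕ) < (k : ℕ) then (1 + e) * p (σ i)
            else if i = k then 1 - (1 + e) * B else 0) := sum_congr rfl fun i _ => hq0σ i
      _ = (∑ i ∈ univ.filter (fun i : Fin n => (i : ℕ) < (k : ℕ)), (1 + e) * p (σ i))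
            + (1 - (1 + e) * B) := splitSum n k _ _
      _ = 1 := by rw [← mul_sum, ← hBdef]; ring
  have hq0nn : ∀ i, 0 ≤ q0 i := by
    intro j
    rw [hq0]
    dsimp only
    split_ifs
    · exact mul_nonneg (by linarith) (hp j).le
    · exact hrem
    · exact le_refl 0
  have hq0ub : ∀ i, q0 i ≤ (1 + e) * p i := by
    intro j
    rw [hq0]
    dsimp only
    split_ifs with hlt heq
    · exact le_refl _
    · have : j = σ k := by rw [← heq, Equiv.apply_symm_apply]
      rw [this]; exact hremub
    · exact mul_nonneg (by linarith) (hp j).le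
  have hq0val : ∑ i, q0 i * f i = (1 + e) * A + (1 - (1 + e) * B) * c := by
    rw [← Equiv.sum_comp σ (fun i => q0 i * f i)]
    calc ∑ i, q0 (σ i) * f (σ i)
        = ∑ i : Fin n, (if (i : ℕ) < (k : ℕ) then (1 + e) * (p (σ i) * f (σ i))
            else if i = k then (1 - (1 + e) * B) * c else 0) := by
          refine sum_congr rfl fun i _ => ?_
          rw [hq0σ i]
          split_ifs with hlt heq
          · ring
          · rw [heq]
          · ring
      _ = (∑ i ∈ univ.filter (fun i : Fin n => (i : ℕ) < (k : ℕ)), (1 + e) * (p (σ i) * f (σ i)))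
            + (1 - (1 + e) * B) * c := splitSum n k _ _
      _ = (1 + e) * A + (1 - (1 + e) * B) * c := by rw [← mul_sum, ← hAdef]
  -- upper bound for any feasible q
  have hub : ∀ q : Fin n → ℝ, (∑ i, q i = 1 ∧ ∀ i, 0 ≤ q i) → (∀ i, q i ≤ (1 + e) * p i) →
      ∑ i, q i * f i ≤ (1 + e) * A + (1 - (1 + e) * B) * c := by
    intro q ⟨hqs, hqn⟩ hqu
    have key : ∑ i, q i * f i = (∑ i, q (σ i) * (f (σ i) - c)) + c := by
      rw [← Equiv.sum_comp σ (fun i => q i * f i)]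
      have hqsσ : ∑ i, q (σ i) = 1 := (Equiv.sum_comp σ q).trans hqs
      have : ∑ i, q (σ i) * (f (σ i) - c)
          = (∑ i, q (σ i) * f (σ i)) - (∑ i, q (σ i)) * c := by
        rw [sum_mul, ← sum_sub_distrib]
        exact sum_congr rfl fun i _ => by ring
      rw [this, hqsσ]; ring
    rw [key]
    have hbound : ∑ i, q (σ i) * (f (σ i) - c)
        ≤ ∑ i ∈ univ.filter (fun i : Fin n => (i : ℕ) < (k : ℕ)),
            (1 + e) * p (σ i) * (f (σ i) - c) := by
      rw [← sum_filter_add_sum_filter_not univ (fun i : Fin n => (i : ℕ) < (k : ℕ))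
        (fun i => q (σ i) * (f (σ i) - c))]
      have h1 : ∑ i ∈ univ.filter (fun i : Fin n => (i : ℕ) < (k : ℕ)),
          q (σ i) * (f (σ i) - c)
          ≤ ∑ i ∈ univ.filter (fun i : Fin n => (i : ℕ) < (k : ℕ)),
            (1 + e) * p (σ i) * (f (σ i) - c) := by
        refine sum_le_sum fun i hi => ?_
        have hik : i ≤ k := by
          have := (mem_filter.mp hi).2
          exact le_of_lt (by exact this)
        have hfc : 0 ≤ f (σ i) - c := by
          have := hσ i k hik
          simp only [hcdef]; linarith
        exact mul_le_mul_of_nonneg_right (hqu (σ i)) hfc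
      have h2 : ∑ i ∈ univ.filter (fun i : Fin n => ¬ (i : ℕ) < (k : ℕ)),
          q (σ i) * (f (σ i) - c) ≤ 0 := by
        refine sum_nonpos fun i hi => ?_
        have hki : k ≤ i := by
          have := (mem_filter.mp hi).2
          exact Fin.le_def.mpr (Nat.le_of_not_lt this)
        have hfc : f (σ i) - c ≤ 0 := by
          have := hσ k i hki
          simp only [hcdef]; linarith
        exact mul_nonpos_of_nonneg_of_nonpos (hqn (σ i)) hfc
      linarith
    have hval : ∑ i ∈ univ.filter (fun i : Fin n => (i : ℕ) < (k : ℕ)),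
        (1 + e) * p (σ i) * (f (σ i) - c)
        = (1 + e) * A - (1 + e) * B * c := by
      simp only [hAdef, hBdef, mul_sum, sum_mul, ← sum_sub_distrib]
      exact sum_congr rfl fun i _ => by ring
    rw [hval] at hbound
    linarith
  -- conclude
  apply le_antisymm
  · refine csSup_le ⟨_, ⟨q0, ⟨⟨hq0sum, hq0nn⟩, hq0ub⟩, rfl⟩⟩ ?_
    rintro x ⟨q, ⟨⟨hqs, hqn⟩, hqu⟩, rfl⟩
    exact hub q ⟨hqs, hqn⟩ hqu
  · refine le_csSup ⟨(1 + e) * A + (1 - (1 + e) * B) * c, ?_⟩ ?_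
    · rintro x ⟨q, ⟨⟨hqs, hqn⟩, hqu⟩, rfl⟩
      exact hub q ⟨hqs, hqn⟩ hqu
    · exact ⟨q0, ⟨⟨hq0sum, hq0nn⟩, hq0ub⟩, hq0val⟩

/-- on the top-k saturation regime, the budgeted-uncertainty worst-case
expected cost is linear in ε with slope `Σ_{i≤k} p_(i)(f_(i) − f_(k+1))`:
`V_b(ε+Δ) − V_b(ε) = Δ · Σ_{i≤k} p_(i)(f_(i) − f_(k+1))`.
(Sorted positions are 0-indexed: `f_(i+1) = f (σ i)`.) -/
theorem stmt7 (n : ℕ) (hn : 2 ≤ n) (p f : Fin n → ℝ)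
    (hp1 : ∑ i, p i = 1) (hp : ∀ i, 0 < p i)
    (σ : Equiv.Perm (Fin n)) (hσ : ∀ i j : Fin n, i ≤ j → f (σ j) ≤ f (σ i))
    (k : Fin n) (hk1 : 1 ≤ (k : ℕ)) (hk2 : (k : ℕ) ≤ n - 1)
    (ε Δ : ℝ) (hε : 0 ≤ ε) (hΔ : 0 < Δ)
    (h1 : (∑ i ∈ Finset.univ.filter (fun i : Fin n => (k : ℕ) < (i : ℕ)), p (σ i))
          ≤ ε * ∑ i ∈ Finset.univ.filter (fun i : Fin n => (i : ℕ) ≤ (k : ℕ)), p (σ i))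
    (h2 : (ε + Δ) * (∑ i ∈ Finset.univ.filter (fun i : Fin n => (i : ℕ) < (k : ℕ)), p (σ i))
          ≤ ∑ i ∈ Finset.univ.filter (fun i : Fin n => (k : ℕ) ≤ (i : ℕ)), p (σ i)) :
    let Vb : ℝ → ℝ := fun e => sSup ((fun q : Fin n → ℝ => ∑ i, q i * f i) ''
      {q : Fin n → ℝ | (∑ i, q i = 1 ∧ ∀ i, 0 ≤ q i) ∧ ∀ i, q i ≤ (1 + e) * p i})
    Vb (ε + Δ) - Vb ε =
      Δ * ∑ i ∈ Finset.univ.filter (fun i : Fin n => (i : ℕ) < (k : ℕ)),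
        p (σ i) * (f (σ i) - f (σ k)) := by
  intro Vb
  have hBnn : 0 ≤ ∑ i ∈ univ.filter (fun i : Fin n => (i : ℕ) < (k : ℕ)), p (σ i) :=
    sum_nonneg fun i _ => (hp (σ i)).le
  have hSle : 0 < ∑ i ∈ univ.filter (fun i : Fin n => (i : ℕ) ≤ (k : ℕ)), p (σ i) := by
    refine sum_pos (fun i _ => hp (σ i)) ⟨k, mem_filter.mpr ⟨mem_univ k, le_refl _⟩⟩
  have hAε : (∑ i ∈ univ.filter (fun i : Fin n => (k : ℕ) < (i : ℕ)), p (σ i))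
      ≤ ε * ∑ i ∈ univ.filter (fun i : Fin n => (i : ℕ) ≤ (k : ℕ)), p (σ i) := h1
  have hAεΔ : (∑ i ∈ univ.filter (fun i : Fin n => (k : ℕ) < (i : ℕ)), p (σ i))
      ≤ (ε + Δ) * ∑ i ∈ univ.filter (fun i : Fin n => (i : ℕ) ≤ (k : ℕ)), p (σ i) := by
    refine h1.trans (mul_le_mul_of_nonneg_right (by linarith) hSle.le)
  have hBεΔ : (ε + Δ) * (∑ i ∈ univ.filter (fun i : Fin n => (i : ℕ) < (k : ℕ)), p (σ i))
      ≤ ∑ i ∈ univ.filter (fun i : Fin n => (k : ℕ) ≤ (i : ℕ)), p (σ i) := h2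
  have hBε : ε * (∑ i ∈ univ.filter (fun i : Fin n => (i : ℕ) < (k : ℕ)), p (σ i))
      ≤ ∑ i ∈ univ.filter (fun i : Fin n => (k : ℕ) ≤ (i : ℕ)), p (σ i) := by
    refine le_trans (mul_le_mul_of_nonneg_right (by linarith) hBnn) h2
  have e1 := sortedVal n p f hp1 hp σ hσ k (ε + Δ) (by linarith) hAεΔ hBεΔ
  have e2 := sortedVal n p f hp1 hp σ hσ k ε hε hAε hBε
  show sSup _ - sSup _ = _
  rw [e1, e2]
  have : ∑ i ∈ univ.filter (fun i : Fin n => (i : ℕ) < (k : ℕ)),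
      p (σ i) * (f (σ i) - f (σ k))
      = (∑ i ∈ univ.filter (fun i : Fin n => (i : ℕ) < (k : ℕ)), p (σ i) * f (σ i))
        - (∑ i ∈ univ.filter (fun i : Fin n => (i : ℕ) < (k : ℕ)), p (σ i)) * f (σ k) := by
    rw [sum_mul, ← sum_sub_distrib]
    exact sum_congr rfl fun i _ => by ring
  rw [this]
  ring
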